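/- arXiv:1310.0204 — 13 statements merged into one kernel-verified Lean document; each statement's English description precedes it below -/
import Mathlib

section
/- Let σ ≥ 2 be an integer, let G be a finite group of order N ≥ 2, let h ≥ 0 and r ≥ 0 be integers, and let g : Fin r → G be a function with g j ≠ 1 for every j. If the Riemann–Hurwitz condition σ − 1 = N·(h − 1 + r/2 − (1/2)·∑_{j} 1/orderOf(g j)) holds in ℚ, then 2·(σ − 1 + N·(1 − h)) ≤ (N − 1)·r and N·r ≤ 4·(σ − 1 + N·(1 − h)). -/
/-- Any skeletal signature `(h, r)` arising from the Riemann–Hurwitz formula for a group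
of order `N ≥ 2` lies in the closed triangular region `P_σ(N)` bounded by the lower line
`L^σ_N` and the upper line `U^σ_N`. -/
theorem skeletal_signature_in_triangle
    (σ N h r : ℕ) (hσ : 2 ≤ σ) (hN : 2 ≤ N)
    (G : Type) [Group G] [Fintype G] (hcard : Fintype.card G = N)
    (g : Fin r → G) (hg : ∀ j, g j ≠ 1)
    (hRH : (σ : ℚ) - 1 =
      (N : ℚ) * ((h : ℚ) - 1 + (r : ℚ) / 2 -
        (1 / 2) * ∑ j, (1 : ℚ) / (orderOf (g j) : ℚ))) :
    2 * ((σ : ℚ) - 1 + (N : ℚ) * (1 - (h : ℚ))) ≤ ((N : ℚ) - 1) * (r : ℚ) ∧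
    (N : ℚ) * (r : ℚ) ≤ 4 * ((σ : ℚ) - 1 + (N : ℚ) * (1 - (h : ℚ))) := by
  have hNpos : (0:ℚ) < N := by positivity
  set S : ℚ := ∑ j, (1 : ℚ) / (orderOf (g j) : ℚ) with hS
  have hbound : ∀ j : Fin r, (1:ℚ)/N ≤ (1:ℚ)/(orderOf (g j) : ℚ) ∧
      (1:ℚ)/(orderOf (g j) : ℚ) ≤ 1/2 := by
    intro j
    have h2 : 2 ≤ orderOf (g j) := by
      have h1 : orderOf (g j) ≠ 1 := by
        simpa [orderOf_eq_one_iff] using hg j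
      have h0 : orderOf (g j) ≠ 0 := by
        simp [orderOf_eq_zero_iff, isOfFinOrder_of_finite]
      omega
    have hle : orderOf (g j) ≤ N := by
      rw [← hcard]; exact Nat.le_of_dvd Fintype.card_pos (orderOf_dvd_card)
    have hopos : (0:ℚ) < (orderOf (g j) : ℚ) := by
      exact_mod_cast Nat.lt_of_lt_of_le Nat.zero_lt_two h2
    constructor
    · apply one_div_le_one_div_of_le hopos
      exact_mod_cast hle
    · apply one_div_le_one_div_of_le (by norm_num)
      exact_mod_cast h2
  have hS1 : (r:ℚ)/N ≤ S := by
    have := Finset.sum_le_sum (s := Finset.univ) (fun j _ => (hbound j).1)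
    simpa [hS, Finset.sum_const, Finset.card_univ, div_eq_mul_inv, mul_comm] using this
  have hS2 : S ≤ (r:ℚ)/2 := by
    have := Finset.sum_le_sum (s := Finset.univ) (fun j _ => (hbound j).2)
    simpa [hS, Finset.sum_const, Finset.card_univ, div_eq_mul_inv, mul_comm] using this
  have hkey : (σ:ℚ) - 1 + (N:ℚ)*(1-(h:ℚ)) = (N:ℚ) * ((r:ℚ) - S) / 2 := by
    rw [hRH]; ring
  constructor
  · rw [hkey]
    have : (N:ℚ) * ((r:ℚ)/N) ≤ (N:ℚ) * S := by
      exact mul_le_mul_of_nonneg_left hS1 (le_of_lt hNpos)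
    rw [mul_div_cancel₀ _ (ne_of_gt hNpos)] at this
    nlinarith
  · rw [hkey]
    nlinarith [mul_le_mul_of_nonneg_left hS2 (le_of_lt hNpos)]
end

section
/- Fix an integer σ ≥ 2 and integers 3 ≤ M < N. If (h, r) is a point of ℝ² with r ≥ 0 lying in the region P_σ(M), i.e. satisfying 2·(σ − 1 + M·(1 − h)) ≤ (M − 1)·r and M·r ≤ 4·(σ − 1 + M·(1 − h)), then (h, r) lies strictly above the lower line L^σ_N, i.e. (N − 1)·r + 2·N·h > 2σ − 2 + 2N. -/
/-- For `3 ≤ M < N`, every point of the region `P_σ(M)` with `r ≥ 0` lies strictly above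
the lower line `L^σ_N`. -/
theorem P_M_above_lower_line_N
    (σ M N : ℤ) (hσ : 2 ≤ σ) (hM : 3 ≤ M) (hMN : M < N)
    (h r : ℝ) (hr : 0 ≤ r)
    (hlow : 2 * ((σ : ℝ) - 1 + (M : ℝ) * (1 - h)) ≤ ((M : ℝ) - 1) * r)
    (hup : (M : ℝ) * r ≤ 4 * ((σ : ℝ) - 1 + (M : ℝ) * (1 - h))) :
    ((N : ℝ) - 1) * r + 2 * (N : ℝ) * h > 2 * (σ : ℝ) - 2 + 2 * (N : ℝ) := by
  have hM' : (3:ℝ) ≤ (M:ℝ) := by exact_mod_cast hM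
  have hN' : (M:ℝ) + 1 ≤ (N:ℝ) := by exact_mod_cast hMN
  have hσ' : (2:ℝ) ≤ (σ:ℝ) := by exact_mod_cast hσ
  have ha : 0 ≤ (σ : ℝ) - 1 + (M : ℝ) * (1 - h) := by nlinarith
  nlinarith [mul_nonneg (sub_nonneg.2 (by linarith : (M:ℝ) ≤ N)) ha,
    mul_nonneg (sub_nonneg.2 (by linarith : (M:ℝ) ≤ N)) hr,
    mul_le_mul_of_nonneg_left hlow (by linarith : (0:ℝ) ≤ (N:ℝ) - M)]
end

section
/- Let σ ≥ 2 and N ≥ 3 be integers, and let h ≥ 0, r ≥ 0 be integers such that (N − 1)·r + 2·N·h < 2σ − 2 + 2N (strictly below the line L^σ_N) and (N + 1)·r + 4·(N + 1)·h > 4·(N + σ) (strictly above the line U^σ_{N+1}). Then there do not exist a finite group G of order at least 2 and a function g : Fin r → G with g j ≠ 1 for all j such that σ − 1 = |G|·(h − 1 + r/2 − (1/2)·∑_j 1/orderOf(g j)) holds in ℚ. -/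
set_option maxHeartbeats 1600000 in
/-- The gap `𝒢_σ(N, N+1)`: no point strictly between the lower line `L^σ_N` and the upper
line `U^σ_{N+1}` is realized by a group action satisfying the Riemann–Hurwitz formula. -/
theorem gap_N_Nplus1
    (σ N h r : ℕ) (hσ : 2 ≤ σ) (hN : 3 ≤ N)
    (hbelow : ((N : ℤ) - 1) * (r : ℤ) + 2 * (N : ℤ) * (h : ℤ) < 2 * (σ : ℤ) - 2 + 2 * (N : ℤ))
    (habove : ((N : ℤ) + 1) * (r : ℤ) + 4 * ((N : ℤ) + 1) * (h : ℤ) > 4 * ((N : ℤ) + (σ : ℤ))) :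
    ¬ ∃ (G : Type) (_ : Group G) (_ : Fintype G) (g : Fin r → G),
      2 ≤ Fintype.card G ∧ (∀ j, g j ≠ 1) ∧
      (σ : ℚ) - 1 =
        (Fintype.card G : ℚ) * ((h : ℚ) - 1 + (r : ℚ) / 2 -
          (1 / 2) * ∑ j, (1 : ℚ) / (orderOf (g j) : ℚ)) := by
  rintro ⟨G, _, _, g, hcard, hg, hRH⟩
  set m : ℕ := Fintype.card G with hm
  have hm0 : 0 < m := Fintype.card_pos
  have hm0Q : (0:ℚ) < (m:ℚ) := by exact_mod_cast hm0
  have hmQ : (2:ℚ) ≤ (m:ℚ) := by exact_mod_cast hcard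
  set S : ℚ := ∑ j, (1 : ℚ) / (orderOf (g j) : ℚ) with hSdef
  -- bounds on orders
  have hord2 : ∀ j, 2 ≤ orderOf (g j) := by
    intro j
    have h1 : orderOf (g j) ≠ 1 := fun hh => hg j (orderOf_eq_one_iff.mp hh)
    have h2 : 0 < orderOf (g j) := orderOf_pos (g j)
    omega
  have hordle : ∀ j, orderOf (g j) ≤ m := fun j => Nat.le_of_dvd hm0 orderOf_dvd_card
  -- upper bound on S
  have hShi : S ≤ (r:ℚ)/2 := by
    rw [hSdef]
    calc ∑ j, (1:ℚ)/(orderOf (g j) : ℚ)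
        ≤ ∑ _j : Fin r, (1:ℚ)/2 := by
          apply Finset.sum_le_sum
          intro j _
          apply one_div_le_one_div_of_le (by norm_num)
          exact_mod_cast hord2 j
      _ = (r:ℚ)/2 := by simp [Finset.sum_const]; ring
  -- lower bound on S
  have hSlo : (r:ℚ)/(m:ℚ) ≤ S := by
    rw [hSdef]
    calc (r:ℚ)/(m:ℚ) = ∑ _j : Fin r, (1:ℚ)/(m:ℚ) := by
          simp [Finset.sum_const]; ring
      _ ≤ ∑ j, (1:ℚ)/(orderOf (g j) : ℚ) := by
          apply Finset.sum_le_sum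
          intro j _
          apply one_div_le_one_div_of_le
          · exact_mod_cast orderOf_pos (g j)
          · exact_mod_cast hordle j
  have hSlo' : (r:ℚ) ≤ (m:ℚ) * S := by
    rw [div_le_iff₀ hm0Q] at hSlo
    nlinarith [hSlo]
  -- r + 4h ≥ 5
  have hr4h : (5:ℤ) ≤ (r:ℤ) + 4*(h:ℤ) := by
    by_contra hcon
    push_neg at hcon
    have hσ' : (2:ℤ) ≤ (σ:ℤ) := by exact_mod_cast hσ
    have hN' : (3:ℤ) ≤ (N:ℤ) := by exact_mod_cast hN
    nlinarith [habove, mul_nonneg (by linarith : (0:ℤ) ≤ (N:ℤ)+1)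
      (by omega : (0:ℤ) ≤ 4 - ((r:ℤ) + 4*(h:ℤ)))]
  have hr4hQ : (5:ℚ) ≤ (r:ℚ) + 4*(h:ℚ) := by exact_mod_cast hr4h
  have hbelowQ : ((N:ℚ) - 1) * (r:ℚ) + 2 * (N:ℚ) * (h:ℚ) < 2 * (σ:ℚ) - 2 + 2 * (N:ℚ) := by
    exact_mod_cast hbelow
  have haboveQ : ((N:ℚ) + 1) * (r:ℚ) + 4 * ((N:ℚ) + 1) * (h:ℚ) > 4 * ((N:ℚ) + (σ:ℚ)) := by
    exact_mod_cast habove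
  -- sandwich σ - 1
  have hdown : (m:ℚ)*((h:ℚ)-1) + (m:ℚ)*(r:ℚ)/4 ≤ (σ:ℚ) - 1 := by
    rw [hRH]
    nlinarith [hShi, hm0Q]
  have hup : (σ:ℚ) - 1 ≤ (m:ℚ)*((h:ℚ)-1) + (m:ℚ)*(r:ℚ)/2 - (r:ℚ)/2 := by
    rw [hRH]
    nlinarith [hSlo', hm0Q]
  have hr0 : (0:ℚ) ≤ (r:ℚ) := by positivity
  have hh0 : (0:ℚ) ≤ (h:ℚ) := by positivity
  have hlt : (m:ℚ) < (N:ℚ) + 1 := by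
    by_contra hcon
    push_neg at hcon
    have hpos : (0:ℚ) < (r:ℚ) + 4*(h:ℚ) - 4 := by linarith
    have key : (0:ℚ) ≤ ((m:ℚ) - ((N:ℚ)+1)) * ((r:ℚ) + 4*(h:ℚ) - 4) :=
      mul_nonneg (by linarith) hpos.le
    have keq : ((m:ℚ) - ((N:ℚ)+1)) * ((r:ℚ) + 4*(h:ℚ) - 4)
        = (m:ℚ)*(r:ℚ) + 4*((m:ℚ)*(h:ℚ)) - 4*(m:ℚ) - (N:ℚ)*(r:ℚ) - (r:ℚ)
          - 4*((N:ℚ)*(h:ℚ)) - 4*(h:ℚ) + 4*(N:ℚ) + 4 := by ring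
    have hd : 4*((m:ℚ)*(h:ℚ)) - 4*(m:ℚ) + (m:ℚ)*(r:ℚ) ≤ 4*(σ:ℚ) - 4 := by
      nlinarith [hdown]
    have ha : (N:ℚ)*(r:ℚ) + (r:ℚ) + 4*((N:ℚ)*(h:ℚ)) + 4*(h:ℚ) > 4*(N:ℚ) + 4*(σ:ℚ) := by
      nlinarith [haboveQ]
    rw [keq] at key
    linarith
  have hgt : (N:ℚ) < (m:ℚ) := by
    by_contra hcon
    push_neg at hcon
    have hpos : (0:ℚ) < (r:ℚ) + 2*(h:ℚ) - 2 := by linarith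
    have key : (0:ℚ) ≤ ((N:ℚ) - (m:ℚ)) * ((r:ℚ) + 2*(h:ℚ) - 2) :=
      mul_nonneg (by linarith) hpos.le
    have keq : ((N:ℚ) - (m:ℚ)) * ((r:ℚ) + 2*(h:ℚ) - 2)
        = (N:ℚ)*(r:ℚ) + 2*((N:ℚ)*(h:ℚ)) - 2*(N:ℚ) - (m:ℚ)*(r:ℚ)
          - 2*((m:ℚ)*(h:ℚ)) + 2*(m:ℚ) := by ring
    have hu : 2*(σ:ℚ) - 2 ≤ 2*((m:ℚ)*(h:ℚ)) - 2*(m:ℚ) + (m:ℚ)*(r:ℚ) - (r:ℚ) := by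
      nlinarith [hup]
    have hb : (N:ℚ)*(r:ℚ) - (r:ℚ) + 2*((N:ℚ)*(h:ℚ)) < 2*(σ:ℚ) - 2 + 2*(N:ℚ) := by
      nlinarith [hbelowQ]
    rw [keq] at key
    linarith
  have h1 : m < N + 1 := by exact_mod_cast hlt
  have h2 : N < m := by exact_mod_cast hgt
  omega
end

section
/- Let σ ≥ 2 and N ≥ 3 be integers with p := N + 1 prime, and let h ≥ 0, r ≥ 0 be integers such that (N − 1)·r + 2·N·h < 2σ − 2 + 2N (strictly below L^σ_N), (N + 2)·r + 4·(N + 2)·h > 4·(N + 1 + σ) (strictly above U^σ_{N+2}), and 2·p·h + (p − 1)·r ≠ 2p − 2 + 2σ (off the line L_σ(p,1)). Then there do not exist a finite group G of order at least 2 and a function g : Fin r → G with g j ≠ 1 for all j such that σ − 1 = |G|·(h − 1 + r/2 − (1/2)·∑_j 1/orderOf(g j)) holds in ℚ. -/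
/-- The gap `𝒢_σ(N, N+2)` when `N + 1` is prime: no point strictly between the lower line
`L^σ_N` and the upper line `U^σ_{N+2}` and off the line `L_σ(N+1, 1)` is realized by a
group action satisfying the Riemann–Hurwitz formula. -/
theorem gap_N_Nplus2_prime
    (σ N h r : ℕ) (hσ : 2 ≤ σ) (hN : 3 ≤ N) (hp : Nat.Prime (N + 1))
    (hbelow : ((N : ℤ) - 1) * (r : ℤ) + 2 * (N : ℤ) * (h : ℤ) < 2 * (σ : ℤ) - 2 + 2 * (N : ℤ))
    (habove : ((N : ℤ) + 2) * (r : ℤ) + 4 * ((N : ℤ) + 2) * (h : ℤ) >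
      4 * ((N : ℤ) + 1 + (σ : ℤ)))
    (hoffline : 2 * ((N : ℤ) + 1) * (h : ℤ) + (((N : ℤ) + 1) - 1) * (r : ℤ) ≠
      2 * ((N : ℤ) + 1) - 2 + 2 * (σ : ℤ)) :
    ¬ ∃ (G : Type) (_ : Group G) (_ : Fintype G) (g : Fin r → G),
      2 ≤ Fintype.card G ∧ (∀ j, g j ≠ 1) ∧
      (σ : ℚ) - 1 =
        (Fintype.card G : ℚ) * ((h : ℚ) - 1 + (r : ℚ) / 2 -
          (1 / 2) * ∑ j, (1 : ℚ) / (orderOf (g j) : ℚ)) := by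
  rintro ⟨G, _, _, g, hcard, hne, hRH⟩
  set c := Fintype.card G with hc
  have hcpos : 0 < c := Fintype.card_pos
  have hord : ∀ j, 2 ≤ orderOf (g j) := by
    intro j
    have h1 : orderOf (g j) ≠ 1 := fun hh => hne j (orderOf_eq_one_iff.mp hh)
    have h0 : 0 < orderOf (g j) := orderOf_pos _
    omega
  have hordle : ∀ j, orderOf (g j) ≤ c := fun j => Nat.le_of_dvd hcpos orderOf_dvd_card
  set S : ℚ := ∑ j, (1 : ℚ) / (orderOf (g j) : ℚ) with hS
  -- cast everything to ℚ
  have hNQ : (3 : ℚ) ≤ (N : ℚ) := by exact_mod_cast hN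
  have hσQ : (2 : ℚ) ≤ (σ : ℚ) := by exact_mod_cast hσ
  have hcQ : (2 : ℚ) ≤ (c : ℚ) := by exact_mod_cast hcard
  have hrQ : (0 : ℚ) ≤ (r : ℚ) := by positivity
  have hbelowQ : ((N : ℚ) - 1) * r + 2 * N * h < 2 * σ - 2 + 2 * N := by exact_mod_cast hbelow
  have haboveQ : ((N : ℚ) + 2) * r + 4 * ((N : ℚ) + 2) * h > 4 * ((N : ℚ) + 1 + σ) := by
    exact_mod_cast habove
  -- bounds on S
  have hSle : S ≤ (r : ℚ) / 2 := by
    have : S ≤ ∑ _j : Fin r, (1 : ℚ) / 2 := by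
      apply Finset.sum_le_sum
      intro j _
      apply one_div_le_one_div_of_le (by norm_num)
      exact_mod_cast hord j
    simpa [Finset.sum_const, Finset.card_univ, mul_one_div, div_eq_mul_inv] using this
  have hcSge : (r : ℚ) ≤ (c : ℚ) * S := by
    have h1 : (r : ℚ) / c ≤ S := by
      have : ∑ _j : Fin r, (1 : ℚ) / c ≤ S := by
        apply Finset.sum_le_sum
        intro j _
        apply one_div_le_one_div_of_le (by exact_mod_cast (hord j).trans' (by norm_num))
        exact_mod_cast hordle j
      simpa [Finset.sum_const, Finset.card_univ, mul_one_div, div_eq_mul_inv] using this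
    have hc0 : (0 : ℚ) < c := by linarith
    calc (r : ℚ) = ((r : ℚ) / c) * c := by field_simp
    _ ≤ S * c := by apply mul_le_mul_of_nonneg_right h1 (le_of_lt hc0)
    _ = c * S := mul_comm _ _
  -- positivity of h - 1 + r/4 from the upper line
  have hBpos4 : (0 : ℚ) < (h : ℚ) - 1 + (r : ℚ) / 4 := by
    by_contra hle
    push_neg at hle
    nlinarith [mul_nonneg (show (0 : ℚ) ≤ (N : ℚ) + 2 by linarith)
      (show (0 : ℚ) ≤ -((h : ℚ) - 1 + (r : ℚ) / 4) by linarith)]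
  -- |G| < N + 2
  have hqlt : (c : ℚ) < (N : ℚ) + 2 := by
    by_contra hge
    push_neg at hge
    nlinarith [mul_nonneg (sub_nonneg.mpr hge) (le_of_lt hBpos4),
      mul_nonneg (show (0 : ℚ) ≤ (c : ℚ) by linarith)
        (show (0 : ℚ) ≤ (r : ℚ) / 2 - S by linarith)]
  -- |G| > N
  have hqgt : (N : ℚ) < (c : ℚ) := by
    by_contra hle
    push_neg at hle
    nlinarith [mul_nonneg (sub_nonneg.mpr hle)
      (show (0 : ℚ) ≤ (h : ℚ) - 1 + (r : ℚ) / 2 by linarith)]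
  -- hence |G| = N + 1
  have hcN : c = N + 1 := by
    have h1 : N < c := by exact_mod_cast hqgt
    have h2 : c < N + 2 := by exact_mod_cast hqlt
    omega
  -- all orders equal N + 1
  have horder : ∀ j, orderOf (g j) = N + 1 := by
    intro j
    have hdvd : orderOf (g j) ∣ N + 1 := hcN ▸ orderOf_dvd_card
    rcases (hp.eq_one_or_self_of_dvd _ hdvd) with h1 | h1
    · exact absurd h1 (by have := hord j; omega)
    · exact h1
  have hNe : ((N : ℚ) + 1) ≠ 0 := by positivity
  have hSval : S = (r : ℚ) / ((N : ℚ) + 1) := by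
    have : S = ∑ _j : Fin r, (1 : ℚ) / ((N : ℚ) + 1) := by
      apply Finset.sum_congr rfl
      intro j _
      rw [horder j]
      push_cast
      ring
    rw [this, Finset.sum_const, Finset.card_univ, Fintype.card_fin, nsmul_eq_mul,
      mul_one_div]
  -- derive the point lies on L_σ(N+1, 1), contradiction
  apply hoffline
  have hgoal : 2 * ((N : ℚ) + 1) * h + (((N : ℚ) + 1) - 1) * r =
      2 * ((N : ℚ) + 1) - 2 + 2 * σ := by
    rw [hSval, hcN] at hRH
    push_cast at hRH
    field_simp at hRH
    have h2Ne : (2 : ℚ) * ((N : ℚ) + 1) ≠ 0 := by positivity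
    have hD : 2 * ((N : ℚ) + 1) *
        (2 * ((N : ℚ) + 1) * h + (((N : ℚ) + 1) - 1) * r -
          (2 * ((N : ℚ) + 1) - 2 + 2 * σ)) = 2 * ((N : ℚ) + 1) * 0 := by
      linear_combination -(2 * ((N : ℚ) + 1)) * hRH
    have := mul_left_cancel₀ h2Ne hD
    linarith
  exact_mod_cast hgoal
end

section
/- Let σ ≥ 9 be an integer and let h ≥ 0, r ≥ 0 be integers satisfying σ + 3 − 4h < r < σ + 2 − 3h (i.e. (h,r) lies strictly between the line D_σ of slope −4 through (1, σ−1) and the line E_σ of slope −3 through (1, σ−1)). Then there do not exist a finite group G of order at least 2 and a function g : Fin r → G with g j ≠ 1 for all j such that σ − 1 = |G|·(h − 1 + r/2 − (1/2)·∑_j 1/orderOf(g j)) holds in ℚ. -/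
/-- Conjecture 3.12 of Anderson–Wootton: for `σ ≥ 9`, no point strictly between the line
`E_σ` of slope `-3` through `(1, σ-1)` and the line `D_σ` of slope `-4` through `(1, σ-1)`
is realized by a group action satisfying the Riemann–Hurwitz formula. -/
theorem conjecture_3_12
    (σ h r : ℕ) (hσ : 9 ≤ σ)
    (hD : (σ : ℤ) + 3 - 4 * (h : ℤ) < (r : ℤ))
    (hE : (r : ℤ) < (σ : ℤ) + 2 - 3 * (h : ℤ)) :
    ¬ ∃ (G : Type) (_ : Group G) (_ : Fintype G) (g : Fin r → G),
      2 ≤ Fintype.card G ∧ (∀ j, g j ≠ 1) ∧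
      (σ : ℚ) - 1 =
        (Fintype.card G : ℚ) * ((h : ℚ) - 1 + (r : ℚ) / 2 -
          (1 / 2) * ∑ j, (1 : ℚ) / (orderOf (g j) : ℚ)) := by
  rintro ⟨G, _, _, g, hcard, hne, heq⟩
  set N := Fintype.card G with hNdef
  have hh3 : 3 ≤ h := by omega
  have hr0 : (0:ℚ) ≤ (r:ℚ) := by positivity
  have hqD : (σ:ℚ) + 3 - 4*(h:ℚ) < (r:ℚ) := by exact_mod_cast hD
  have hqE : (r:ℚ) < (σ:ℚ) + 2 - 3*(h:ℚ) := by exact_mod_cast hE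
  have hqh : (3:ℚ) ≤ (h:ℚ) := by exact_mod_cast hh3
  have hN0 : 0 < N := Fintype.card_pos
  have hNq2 : (2:ℚ) ≤ (N:ℚ) := by exact_mod_cast hcard
  have horder : ∀ j, 2 ≤ orderOf (g j) := by
    intro j
    have h1 : orderOf (g j) ≠ 1 := fun hh => hne j (orderOf_eq_one_iff.mp hh)
    have h0 : 0 < orderOf (g j) := orderOf_pos _
    omega
  rcases Nat.lt_or_ge N 4 with h4 | h4
  · -- N = 2 or 3
    have hNp : Nat.Prime N := by
      interval_cases N <;> norm_num
    have horderN : ∀ j, ((orderOf (g j) : ℚ)) = (N : ℚ) := by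
      intro j
      have := (hNp.eq_one_or_self_of_dvd _ (orderOf_dvd_card (x := g j))).resolve_left
        (by have := horder j; omega)
      exact_mod_cast congrArg Nat.cast this
    have hSeq : ∑ j : Fin r, (1:ℚ)/(orderOf (g j) : ℚ) = (r:ℚ)/(N:ℚ) := by
      simp only [horderN]
      rw [Finset.sum_const, Finset.card_univ, Fintype.card_fin, nsmul_eq_mul]
      ring
    rw [hSeq] at heq
    have hNne : (N:ℚ) ≠ 0 := by positivity
    have hNq3 : (N:ℚ) ≤ 3 := by exact_mod_cast Nat.lt_succ_iff.mp h4
    field_simp at heq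
    nlinarith [mul_nonneg (by linarith : (0:ℚ) ≤ 3 - (N:ℚ)) (by linarith : (0:ℚ) ≤ (h:ℚ) - 1),
      mul_nonneg (by linarith : (0:ℚ) ≤ 3 - (N:ℚ)) hr0, hqE, hqh, hNq2]
  · -- N ≥ 4
    have hNq4 : (4:ℚ) ≤ (N:ℚ) := by exact_mod_cast h4
    have hSle : ∑ j : Fin r, (1:ℚ)/(orderOf (g j) : ℚ) ≤ (r:ℚ)/2 := by
      calc ∑ j : Fin r, (1:ℚ)/(orderOf (g j) : ℚ) ≤ ∑ _j : Fin r, (1:ℚ)/2 := by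
            apply Finset.sum_le_sum
            intro j _
            apply one_div_le_one_div_of_le
            · norm_num
            · exact_mod_cast horder j
        _ = (r:ℚ)/2 := by
            rw [Finset.sum_const, Finset.card_univ, Fintype.card_fin, nsmul_eq_mul]
            ring
    set S := ∑ j : Fin r, (1:ℚ)/(orderOf (g j) : ℚ) with hSdef
    nlinarith [mul_nonneg (by linarith : (0:ℚ) ≤ (N:ℚ) - 4) (by linarith : (0:ℚ) ≤ (h:ℚ) - 1),
      mul_nonneg (by positivity : (0:ℚ) ≤ (N:ℚ)) (by linarith : (0:ℚ) ≤ (r:ℚ)/4 - S/2),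
      mul_nonneg (by linarith : (0:ℚ) ≤ (N:ℚ) - 4) hr0, hqD]
end

section
/- For every integer σ ≥ 7, the nearest integer [2σ/3 − 4] satisfies 2σ/3 − 14/3 < [2σ/3 − 4] < 2σ/3 − 10/3; consequently, for every integer M ≥ 2 with M ≠ 5, the point (2, [2σ/3 − 4]) does not lie in the region P_σ(M), i.e. it fails at least one of the inequalities 2·(σ − 1 + M·(1 − 2)) ≤ (M − 1)·[2σ/3 − 4] and M·[2σ/3 − 4] ≤ 4·(σ − 1 + M·(1 − 2)). -/
lemma round_two_thirds : round ((2:ℚ)/3) = 1 := by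
  rw [round_eq]
  norm_num

lemma round_one_third : round ((1:ℚ)/3) = 0 := by
  rw [round_eq]
  norm_num

/-- Conjecture 3.13 of Anderson–Wootton: for `σ ≥ 7`, the point `(2, [2σ/3 - 4])` lies in
the gap `𝒢_σ(4,6)`, and hence lies in no region `P_σ(M)` with `M ≠ 5`. -/
theorem conjecture_3_13 (σ : ℕ) (hσ : 7 ≤ σ) :
    (2 * (σ : ℚ) / 3 - 14 / 3 < (round (2 * (σ : ℚ) / 3 - 4) : ℚ) ∧
      (round (2 * (σ : ℚ) / 3 - 4) : ℚ) < 2 * (σ : ℚ) / 3 - 10 / 3) ∧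
    ∀ M : ℕ, 2 ≤ M → M ≠ 5 →
      ¬ (2 * ((σ : ℚ) - 1 + (M : ℚ) * (1 - 2)) ≤
          ((M : ℚ) - 1) * (round (2 * (σ : ℚ) / 3 - 4) : ℚ) ∧
        (M : ℚ) * (round (2 * (σ : ℚ) / 3 - 4) : ℚ) ≤
          4 * ((σ : ℚ) - 1 + (M : ℚ) * (1 - 2))) := by
  have key : 2 * (σ : ℚ) / 3 - 14 / 3 < (round (2 * (σ : ℚ) / 3 - 4) : ℚ) ∧
      (round (2 * (σ : ℚ) / 3 - 4) : ℚ) < 2 * (σ : ℚ) / 3 - 10 / 3 := by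
    obtain ⟨k, hk | hk | hk⟩ : ∃ k, σ = 3*k ∨ σ = 3*k+1 ∨ σ = 3*k+2 := ⟨σ/3, by omega⟩
    · subst hk
      have hx : 2 * ((3*k : ℕ) : ℚ) / 3 - 4 = ((2*(k:ℤ) - 4 : ℤ) : ℚ) := by
        push_cast; ring
      rw [hx, round_intCast]
      constructor <;> (push_cast; linarith)
    · subst hk
      have hx : 2 * ((3*k+1 : ℕ) : ℚ) / 3 - 4 = ((2*(k:ℤ) - 4 : ℤ) : ℚ) + 2/3 := by
        push_cast; ring
      rw [hx, round_intCast_add, round_two_thirds]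
      constructor <;> (push_cast; linarith)
    · subst hk
      have hx : 2 * ((3*k+2 : ℕ) : ℚ) / 3 - 4 = ((2*(k:ℤ) - 3 : ℤ) : ℚ) + 1/3 := by
        push_cast; ring
      rw [hx, round_intCast_add, round_one_third]
      constructor <;> (push_cast; linarith)
  refine ⟨key, ?_⟩
  rintro M hM hM5 ⟨hA, hB⟩
  obtain ⟨h1, h2⟩ := key
  have hσq : (7:ℚ) ≤ σ := by exact_mod_cast hσ
  have hMq : (2:ℚ) ≤ M := by exact_mod_cast hM
  rcases (by omega : M ≤ 4 ∨ 6 ≤ M) with h | h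
  · have hMq4 : (M:ℚ) ≤ 4 := by exact_mod_cast h
    nlinarith [mul_lt_mul_of_pos_left h2 (show (0:ℚ) < (M:ℚ) - 1 by linarith)]
  · have hMq6 : (6:ℚ) ≤ M := by exact_mod_cast h
    nlinarith [mul_lt_mul_of_pos_left h1 (show (0:ℚ) < (M:ℚ) by linarith)]
end

section
/- For every integer σ ≥ 18, both nearest integers [2σ/3 − 7] and [2σ/3 − 8] satisfy 2σ/3 − 26/3 < [2σ/3 − 8] < [2σ/3 − 7] < 2σ/3 − 6; consequently, for every integer M ≥ 2 with M ≠ 5, neither of the points (3, [2σ/3 − 7]) and (3, [2σ/3 − 8]) lies in the region P_σ(M). -/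
lemma gap_lemma (σ : ℚ) (hσ : 18 ≤ σ) (r : ℚ)
    (h1 : 2 * σ / 3 - 26 / 3 < r) (h2 : r < 2 * σ / 3 - 6)
    (M : ℕ) (hM : 2 ≤ M) (hM5 : M ≠ 5) :
    ¬ (2 * (σ - 1 + (M : ℚ) * (1 - 3)) ≤ ((M : ℚ) - 1) * r ∧
        (M : ℚ) * r ≤ 4 * (σ - 1 + (M : ℚ) * (1 - 3))) := by
  rcases le_or_gt (M : ℚ) 4 with hle | hgt
  · rintro ⟨hA, -⟩
    have hM2 : (2 : ℚ) ≤ M := by exact_mod_cast hM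
    nlinarith [mul_lt_mul_of_pos_left h2 (by linarith : (0:ℚ) < (M:ℚ) - 1)]
  · have h6 : (6 : ℚ) ≤ M := by
      have h4 : 4 < M := by exact_mod_cast hgt
      have h6' : 6 ≤ M := by omega
      exact_mod_cast h6'
    rintro ⟨-, hB⟩
    nlinarith [mul_lt_mul_of_pos_left h1 (by linarith : (0:ℚ) < (M:ℚ))]

/-- First part of Conjecture 3.14 of Anderson–Wootton: for `σ ≥ 18`, the points
`(3, [2σ/3 - 7])` and `(3, [2σ/3 - 8])` lie in the gap `𝒢_σ(4,6)`, and hence lie in no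
region `P_σ(M)` with `M ≠ 5`. -/
theorem conjecture_3_14_part1 (σ : ℕ) (hσ : 18 ≤ σ) :
    (2 * (σ : ℚ) / 3 - 26 / 3 < (round (2 * (σ : ℚ) / 3 - 8) : ℚ) ∧
      (round (2 * (σ : ℚ) / 3 - 8) : ℚ) < (round (2 * (σ : ℚ) / 3 - 7) : ℚ) ∧
      (round (2 * (σ : ℚ) / 3 - 7) : ℚ) < 2 * (σ : ℚ) / 3 - 6) ∧
    ∀ M : ℕ, 2 ≤ M → M ≠ 5 →
      (¬ (2 * ((σ : ℚ) - 1 + (M : ℚ) * (1 - 3)) ≤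
            ((M : ℚ) - 1) * (round (2 * (σ : ℚ) / 3 - 7) : ℚ) ∧
          (M : ℚ) * (round (2 * (σ : ℚ) / 3 - 7) : ℚ) ≤
            4 * ((σ : ℚ) - 1 + (M : ℚ) * (1 - 3)))) ∧
      (¬ (2 * ((σ : ℚ) - 1 + (M : ℚ) * (1 - 3)) ≤
            ((M : ℚ) - 1) * (round (2 * (σ : ℚ) / 3 - 8) : ℚ) ∧
          (M : ℚ) * (round (2 * (σ : ℚ) / 3 - 8) : ℚ) ≤
            4 * ((σ : ℚ) - 1 + (M : ℚ) * (1 - 3)))) := by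
  set x : ℚ := 2 * (σ : ℚ) / 3 - 8 with hx
  have habs : |x - (round x : ℚ)| ≤ 1 / 2 := abs_sub_round x
  have hlb : x - 1/2 ≤ (round x : ℚ) := by
    have := abs_le.mp habs
    linarith [this.2]
  have hub : (round x : ℚ) ≤ x + 1/2 := by
    have := abs_le.mp habs
    linarith [this.1]
  have h7 : round (2 * (σ : ℚ) / 3 - 7) = round x + 1 := by
    have : 2 * (σ : ℚ) / 3 - 7 = x + (1 : ℤ) := by push_cast [hx]; ring
    rw [this, round_add_intCast]
  have hσQ : (18 : ℚ) ≤ (σ : ℚ) := by exact_mod_cast hσ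
  have g8a : 2 * (σ : ℚ) / 3 - 26 / 3 < (round x : ℚ) := by
    have : 2 * (σ : ℚ) / 3 - 26/3 < x - 1/2 := by rw [hx]; linarith
    linarith
  have g7b : ((round x : ℚ) + 1) < 2 * (σ : ℚ) / 3 - 6 := by
    have : x + 1/2 + 1 < 2 * (σ : ℚ) / 3 - 6 := by rw [hx]; linarith
    linarith
  have g8b : (round x : ℚ) < 2 * (σ : ℚ) / 3 - 6 := by linarith
  have g7a : 2 * (σ : ℚ) / 3 - 26 / 3 < ((round x : ℚ) + 1) := by linarith
  refine ⟨⟨g8a, ?_, ?_⟩, ?_⟩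
  · rw [h7]; push_cast; linarith
  · rw [h7]; push_cast; exact g7b
  · intro M hM hM5
    constructor
    · rw [h7]; push_cast
      exact gap_lemma (σ : ℚ) hσQ _ g7a g7b M hM hM5
    · exact gap_lemma (σ : ℚ) hσQ _ g8a g8b M hM hM5
end

section
/- For every integer σ ≥ 18 with σ ≡ 2 (mod 3), the nearest integer [2σ/3 − 6] satisfies 2σ/3 − 26/3 < [2σ/3 − 6] < 2σ/3 − 6; consequently, for every integer M ≥ 2 with M ≠ 5, the point (3, [2σ/3 − 6]) does not lie in the region P_σ(M). -/
/-- Second part of Conjecture 3.14 of Anderson–Wootton: for `σ ≥ 18` with `σ ≡ 2 (mod 3)`,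
the point `(3, [2σ/3 - 6])` lies in the gap `𝒢_σ(4,6)`, and hence lies in no region
`P_σ(M)` with `M ≠ 5`. -/
theorem conjecture_3_14_part2 (σ : ℕ) (hσ : 18 ≤ σ) (hmod : σ % 3 = 2) :
    (2 * (σ : ℚ) / 3 - 26 / 3 < (round (2 * (σ : ℚ) / 3 - 6) : ℚ) ∧
      (round (2 * (σ : ℚ) / 3 - 6) : ℚ) < 2 * (σ : ℚ) / 3 - 6) ∧
    ∀ M : ℕ, 2 ≤ M → M ≠ 5 →
      ¬ (2 * ((σ : ℚ) - 1 + (M : ℚ) * (1 - 3)) ≤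
          ((M : ℚ) - 1) * (round (2 * (σ : ℚ) / 3 - 6) : ℚ) ∧
        (M : ℚ) * (round (2 * (σ : ℚ) / 3 - 6) : ℚ) ≤
          4 * ((σ : ℚ) - 1 + (M : ℚ) * (1 - 3))) := by
  obtain ⟨t, rfl⟩ : ∃ t, σ = 3 * t + 2 := ⟨σ / 3, by omega⟩
  have ht : 6 ≤ t := by omega
  have htq : (6 : ℚ) ≤ (t : ℚ) := by exact_mod_cast ht
  have hq : 2 * ((3 * t + 2 : ℕ) : ℚ) / 3 - 6 = (1 : ℚ) / 3 + ((2 * (t : ℤ) - 5 : ℤ) : ℚ) := by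
    push_cast; ring
  have hr : round (2 * ((3 * t + 2 : ℕ) : ℚ) / 3 - 6) = 2 * (t : ℤ) - 5 := by
    rw [hq, round_add_intCast]
    norm_num [round_eq]
  rw [hr]
  constructor
  · push_cast
    constructor <;> linarith
  · rintro M hM2 hM5 ⟨h1, h2⟩
    push_cast at h1 h2
    have h4 : (4 : ℚ) < (M : ℚ) := by nlinarith
    have h6 : (M : ℚ) < 6 := by nlinarith
    have h4' : 4 < M := by exact_mod_cast h4
    have h6' : M < 6 := by exact_mod_cast h6
    omega
end

section
/- Let p be an odd prime and set σ = p + 1. Let h ≥ 2 and n ≥ 2 be integers. Then there do not exist a finite group G, functions a, b : Fin h → G, and an element c ∈ G such that: (i) the subgroup generated by the ranges of a and b together with c is all of G; (ii) orderOf c = n; (iii) (∏_{i} ⁅a i, b i⁆) · c = 1; and (iv) 2·n·(σ − 1) = |G| · (n·(2h − 1) − 1). -/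
open scoped commutatorElement

/-- A subgroup of index two is normal. -/
lemma aux_normal_of_index_two {G : Type*} [Group G] (H : Subgroup G)
    (hH : H.index = 2) : H.Normal := by
  constructor
  intro x hx g
  have h1 : g * x * g⁻¹ ∈ H ↔ (g * x ∈ H ↔ g⁻¹ ∈ H) :=
    Subgroup.mul_mem_iff_of_index_two hH
  have h2 : g * x ∈ H ↔ (g ∈ H ↔ x ∈ H) := Subgroup.mul_mem_iff_of_index_two hH
  rw [h1, h2, H.inv_mem_iff]
  tauto

/-- Nonexistence half of Theorem 4.1 of Anderson–Wootton: for `σ = p + 1` with `p` an odd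
prime and `h ≥ 2`, no finite group has an `(h; n)`-generating vector compatible with the
Riemann–Hurwitz formula (so `(h, 1)` is not a skeletal signature in genus `p + 1`). -/
theorem no_h_one_action_genus_p_plus_one
    (p : ℕ) (hp : p.Prime) (hodd : Odd p) (σ : ℕ) (hσ : σ = p + 1)
    (h n : ℕ) (hh : 2 ≤ h) (hn : 2 ≤ n) :
    ¬ ∃ (G : Type) (_ : Group G) (_ : Fintype G) (a b : Fin h → G) (c : G),
      Subgroup.closure (Set.range a ∪ Set.range b ∪ {c}) = ⊤ ∧
      orderOf c = n ∧
      (List.ofFn fun i => ⁅a i, b i⁆).prod * c = 1 ∧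
      2 * n * (σ - 1) = Fintype.card G * (n * (2 * h - 1) - 1) := by
  rintro ⟨G, _, _, a, b, c, hgen, hc, hprod, hRH⟩
  -- notation
  set m : ℕ := n * (2 * h - 1) - 1 with hm
  have hm5 : 5 ≤ m := by
    have h6 : 2 * 3 ≤ n * (2 * h - 1) := Nat.mul_le_mul hn (by omega)
    omega
  have hσ1 : σ - 1 = p := by omega
  rw [hσ1] at hRH
  -- n divides the order of G
  have hdvd : n ∣ Fintype.card G := hc ▸ orderOf_dvd_card
  obtain ⟨k, hk⟩ := hdvd
  have hnpos : 0 < n := by omega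
  have hkey : 2 * p = k * m := by
    have heq : n * (2 * p) = n * (k * m) := by
      rw [hk] at hRH
      calc n * (2 * p) = 2 * n * p := by ring
        _ = n * k * m := hRH
        _ = n * (k * m) := by ring
    exact Nat.eq_of_mul_eq_mul_left hnpos heq
  have hppos : 0 < p := hp.pos
  have hkpos : 0 < k := by
    rcases Nat.eq_zero_or_pos k with h0 | h0
    · subst h0
      rw [zero_mul] at hkey
      omega
    · exact h0
  -- k = 1 or k = 2
  have hk12 : k = 1 ∨ k = 2 := by
    have hkdvd : k ∣ 2 * p := ⟨m, hkey⟩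
    have hpk : ¬ p ∣ k := by
      intro hpk
      have := Nat.le_of_dvd hkpos hpk
      nlinarith
    have hcop : Nat.Coprime k p := (Nat.coprime_comm.mp ((hp.coprime_iff_not_dvd).mpr hpk))
    have : k ∣ 2 := hcop.dvd_of_dvd_mul_right hkdvd
    have := Nat.le_of_dvd (by norm_num) this
    interval_cases k <;> simp_all
  -- `Nat.card` version of the order of G
  have hcard : Nat.card G = n * k := by rw [Nat.card_eq_fintype_card, hk]
  rcases hk12 with rfl | rfl
  · -- |G| = n, so G is cyclic generated by c, hence abelian, hence c = 1
    have htop : Subgroup.zpowers c = ⊤ := by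
      apply Subgroup.eq_top_of_card_eq
      rw [Nat.card_zpowers, hc, hcard, mul_one]
    have hcomm : ∀ x y : G, x * y = y * x := by
      intro x y
      obtain ⟨i, hi⟩ := Subgroup.mem_zpowers_iff.mp (htop ▸ Subgroup.mem_top x)
      obtain ⟨j, hj⟩ := Subgroup.mem_zpowers_iff.mp (htop ▸ Subgroup.mem_top y)
      rw [← hi, ← hj, ← zpow_add, ← zpow_add, add_comm]
    have hone : (List.ofFn fun i => ⁅a i, b i⁆).prod = 1 := by
      apply List.prod_eq_one
      intro x hx
      obtain ⟨i, rfl⟩ := List.mem_ofFn.mp hx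
      exact commutatorElement_eq_one_iff_commute.mpr (hcomm _ _)
    rw [hone, one_mul] at hprod
    rw [hprod, orderOf_one] at hc
    omega
  · -- |G| = 2n, m = p, and n is even
    have hmp : m = p := by omega
    have hnp1 : n * (2 * h - 1) = p + 1 := by omega
    have hneven : 2 ∣ n := by
      have h2 : 2 ∣ n * (2 * h - 1) := by
        obtain ⟨t, ht⟩ := hodd
        omega
      rcases (Nat.prime_two.dvd_mul).mp h2 with h' | h'
      · exact h'
      · exfalso; omega
    -- the cyclic subgroup generated by c has index 2, hence is normal
    have hcardH : Nat.card (Subgroup.zpowers c) = n := by rw [Nat.card_zpowers, hc]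
    have hindex2 : (Subgroup.zpowers c).index = 2 := by
      have := Subgroup.card_mul_index (Subgroup.zpowers c)
      rw [hcardH, hcard] at this
      have hi := Nat.eq_of_mul_eq_mul_left hnpos this
      omega
    have hnormH : (Subgroup.zpowers c).Normal := aux_normal_of_index_two _ hindex2
    -- the subgroup generated by c^2 is normal
    set N : Subgroup G := Subgroup.zpowers (c ^ 2) with hN
    have hnormN : N.Normal := by
      constructor
      intro x hx g
      obtain ⟨j, rfl⟩ := Subgroup.mem_zpowers_iff.mp hx
      obtain ⟨i, hi⟩ := Subgroup.mem_zpowers_iff.mp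
        (hnormH.conj_mem c (Subgroup.mem_zpowers c) g)
      refine Subgroup.mem_zpowers_iff.mpr ⟨i * j, ?_⟩
      have hconj : g * ((c ^ 2) ^ j) * g⁻¹ = (g * c * g⁻¹) ^ ((2 : ℤ) * j) := by
        rw [conj_zpow, ← zpow_natCast c 2, ← zpow_mul]
        norm_num
      rw [hconj, ← hi, ← zpow_mul, ← zpow_natCast c 2, ← zpow_mul]
      congr 1
      ring
    -- the quotient G/N has order 4
    have hcardN : Nat.card N = n / 2 := by
      rw [hN, Nat.card_zpowers, orderOf_pow, hc, Nat.gcd_comm]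
      obtain ⟨t, rfl⟩ := hneven
      simp [Nat.gcd_mul_left]
    have hindexN : N.index = 4 := by
      have := Subgroup.card_mul_index N
      rw [hcardN, hcard] at this
      obtain ⟨t, rfl⟩ := hneven
      have htpos : 0 < t := by omega
      rw [Nat.mul_div_cancel_left t (by norm_num)] at this
      have : t * N.index = t * 4 := by omega
      exact Nat.eq_of_mul_eq_mul_left htpos this
    have hcardQ : Nat.card (G ⧸ N) = 2 ^ 2 := by
      rw [← Subgroup.index_eq_card, hindexN]
      norm_num
    -- hence G/N is abelian
    haveI : Fact (Nat.Prime 2) := ⟨Nat.prime_two⟩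
    have hcommQ : ∀ x y : G ⧸ N, x * y = y * x :=
      IsPGroup.commutative_of_card_eq_prime_sq hcardQ
    -- push the long relation to the quotient
    set φ : G →* G ⧸ N := QuotientGroup.mk' N with hφ
    have hφprod : (List.ofFn fun i => ⁅φ (a i), φ (b i)⁆).prod * φ c = 1 := by
      have hh' := congrArg φ hprod
      rw [map_one, map_mul, map_list_prod, List.map_ofFn] at hh'
      simpa [Function.comp_def, map_commutatorElement] using hh'
    have honeQ : (List.ofFn fun i => ⁅φ (a i), φ (b i)⁆).prod = 1 := by
      apply List.prod_eq_one
      intro x hx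
      obtain ⟨i, rfl⟩ := List.mem_ofFn.mp hx
      exact commutatorElement_eq_one_iff_commute.mpr (hcommQ _ _)
    rw [honeQ, one_mul] at hφprod
    -- so c ∈ N = ⟨c²⟩, contradicting that c has even order
    have hcN : c ∈ N := (QuotientGroup.eq_one_iff c).mp hφprod
    obtain ⟨j, hj⟩ := Subgroup.mem_zpowers_iff.mp hcN
    have hcz : c ^ (2 * j - 1) = 1 := by
      rw [zpow_sub, zpow_mul, zpow_one]
      rw [show ((2 : ℤ)) = ((2 : ℕ) : ℤ) by norm_num, zpow_natCast, hj]
      group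
    have hdvd2 : (n : ℤ) ∣ 2 * j - 1 := by
      rw [← hc]
      exact orderOf_dvd_iff_zpow_eq_one.mpr hcz
    have h2dvd : (2 : ℤ) ∣ 2 * j - 1 := by
      refine dvd_trans ?_ hdvd2
      exact_mod_cast Int.natCast_dvd_natCast.mpr hneven
    obtain ⟨s, hs⟩ := h2dvd
    omega
end

section
/- Let n ≥ 2 be an even integer and let G be a finite group of order 2n. Then the commutator subgroup of G contains no element of order n; in particular, for all a, b ∈ G, the commutator ⁅a, b⁆ does not have order n, and no product of commutators in G has order n. -/
open scoped commutatorElement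

/-- For even `n ≥ 2`, a group of order `2n` has no element of order `n` in its commutator
subgroup; in particular no commutator, and no product of commutators, has order `n`. -/
theorem commutator_subgroup_no_element_of_order_n
    (n : ℕ) (hn : 2 ≤ n) (hne : Even n) (G : Type) [Group G] [Fintype G]
    (hG : Fintype.card G = 2 * n) :
    (∀ c ∈ commutator G, orderOf c ≠ n) ∧
    (∀ a b : G, orderOf ⁅a, b⁆ ≠ n) ∧
    (∀ l : List G, (∀ x ∈ l, ∃ a b : G, x = ⁅a, b⁆) → orderOf l.prod ≠ n) := by
  obtain ⟨m, rfl⟩ := hne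
  have hm : 1 ≤ m := by omega
  have hcardG : Nat.card G = 2 * (m + m) := by
    rw [Nat.card_eq_fintype_card, hG]
  have main : ∀ c ∈ commutator G, orderOf c ≠ m + m := by
    intro c hc hoc
    -- H = ⟨c⟩ has index 2
    set H : Subgroup G := Subgroup.zpowers c with hH
    have hcardH : Nat.card H = m + m := by
      rw [Nat.card_zpowers, hoc]
    have hidx : H.index = 2 := by
      have := H.card_mul_index
      rw [hcardH, hcardG] at this
      exact Nat.eq_of_mul_eq_mul_left (show 0 < m + m by omega)
        (by rw [this]; ring)
    -- conjugates of c stay in H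
    have hconj : ∀ g : G, g * c * g⁻¹ ∈ H := by
      intro g
      rw [Subgroup.mul_mem_iff_of_index_two hidx,
        Subgroup.mul_mem_iff_of_index_two hidx]
      have hcH : c ∈ H := Subgroup.mem_zpowers c
      have : g⁻¹ ∈ H ↔ g ∈ H := Subgroup.inv_mem_iff H
      tauto
    -- N = ⟨c^2⟩ is normal
    set N : Subgroup G := Subgroup.zpowers (c ^ 2) with hN
    have hNnormal : N.Normal := by
      constructor
      intro x hx g
      obtain ⟨k, hk⟩ := hx
      obtain ⟨j, hj⟩ := hconj g
      simp only at hk hj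
      have hx2 : x = c ^ (2 * k) := by
        rw [← hk, ← zpow_natCast c 2, ← zpow_mul]; norm_num
      have : g * x * g⁻¹ = (c ^ 2) ^ (j * k) := by
        rw [hx2, ← conj_zpow, ← hj, ← zpow_mul, ← zpow_natCast c 2, ← zpow_mul]
        ring_nf
      rw [this]
      exact Subgroup.zpow_mem N (Subgroup.mem_zpowers _) _
    -- order of c^2 is m
    have hoc2 : orderOf (c ^ 2) = m := by
      rw [orderOf_pow, hoc]
      have h2 : Nat.gcd (m + m) 2 = 2 := Nat.gcd_eq_right ⟨m, by ring⟩
      rw [h2]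
      omega
    have hcardN : Nat.card N = m := by rw [Nat.card_zpowers, hoc2]
    -- quotient has order 4
    have hidxN : N.index = 4 := by
      have := N.card_mul_index
      rw [hcardN, hcardG] at this
      exact Nat.eq_of_mul_eq_mul_left (show 0 < m by omega)
        (by rw [this]; ring)
    have hcardQ : Nat.card (G ⧸ N) = 2 ^ 2 := hidxN
    -- group of order 4 is abelian
    haveI : Fact (Nat.Prime 2) := ⟨Nat.prime_two⟩
    have hcomm : ∀ a b : G ⧸ N, a * b = b * a :=
      IsPGroup.commutative_of_card_eq_prime_sq hcardQ
    -- commutator G ≤ N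
    have hle : commutator G ≤ N := by
      rw [commutator_def, Subgroup.commutator_le]
      intro a _ b _
      rw [← QuotientGroup.eq_one_iff]
      have : (QuotientGroup.mk ⁅a, b⁆ : G ⧸ N)
          = ⁅(QuotientGroup.mk a : G ⧸ N), (QuotientGroup.mk b : G ⧸ N)⁆ := rfl
      rw [this, commutatorElement_eq_one_iff_mul_comm]
      exact hcomm _ _
    -- c ∈ N, contradiction
    obtain ⟨k, hk⟩ := hle hc
    simp only at hk
    have hk' : c ^ (2 * k) = c := by
      rw [← zpow_natCast c 2, ← zpow_mul] at hk
      exact_mod_cast hk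
    have hone : c ^ (2 * k - 1) = 1 := by
      rw [sub_eq_add_neg, zpow_add, hk', zpow_neg_one, mul_inv_cancel]
    have hdvd : ((orderOf c : ℕ) : ℤ) ∣ 2 * k - 1 :=
      orderOf_dvd_iff_zpow_eq_one.mpr hone
    rw [hoc] at hdvd
    obtain ⟨j, hj⟩ := hdvd
    have h2 : (2 : ℤ) ∣ 2 * k - 1 := by
      rw [hj]
      exact Dvd.dvd.mul_right ⟨(m : ℤ), by push_cast; ring⟩ j
    omega
  refine ⟨main, fun a b => main _ (Subgroup.commutator_mem_commutator
    (Subgroup.mem_top a) (Subgroup.mem_top b)), fun l hl => main _ ?_⟩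
  apply Subgroup.list_prod_mem
  intro x hx
  obtain ⟨a, b, rfl⟩ := hl x hx
  exact Subgroup.commutator_mem_commutator (Subgroup.mem_top a) (Subgroup.mem_top b)
end

section
/- Let n ≥ 2 and h ≥ 1 be integers and let G = QuaternionGroup n be the generalized quaternion (dicyclic) group ⟨x, y | x^n = y², y⁻¹xy = x⁻¹⟩ of order 4n. Then there exist functions a, b : Fin h → G and an element c ∈ G such that: (i) the subgroup generated by the ranges of a and b together with c is all of G; (ii) orderOf c = n; and (iii) (∏_{i} ⁅a i, b i⁆) · c = 1. -/
open scoped commutatorElement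

open QuaternionGroup in
/-- The generalized quaternion (dicyclic) group of order `4n` admits an
`(h; n)`-generating vector for every `h ≥ 1`. -/
theorem quaternion_generating_vector
    (n h : ℕ) (hn : 2 ≤ n) (hh : 1 ≤ h) :
    ∃ (a b : Fin h → QuaternionGroup n) (c : QuaternionGroup n),
      Subgroup.closure (Set.range a ∪ Set.range b ∪ {c}) = ⊤ ∧
      orderOf c = n ∧
      (List.ofFn fun i => ⁅a i, b i⁆).prod * c = 1 := by
  haveI : NeZero n := ⟨by omega⟩
  haveI : NeZero (2 * n) := ⟨by omega⟩
  obtain ⟨h, rfl⟩ : ∃ h', h = h' + 1 := ⟨h - 1, by omega⟩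
  refine ⟨fun i => if i = 0 then QuaternionGroup.a 1 else 1,
          fun i => if i = 0 then QuaternionGroup.xa 0 else 1,
          QuaternionGroup.a (-2), ?_, ?_, ?_⟩
  · rw [eq_top_iff]
    rintro g -
    have hx : QuaternionGroup.a (1 : ZMod (2*n)) ∈
        (Set.range (fun i : Fin (h+1) => if i = 0 then QuaternionGroup.a (1 : ZMod (2*n)) else 1) ∪
         Set.range (fun i : Fin (h+1) => if i = 0 then QuaternionGroup.xa 0 else 1) ∪
         {QuaternionGroup.a (-2)}) :=
      Set.mem_union_left _ (Set.mem_union_left _ ⟨0, if_pos rfl⟩)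
    have hy : QuaternionGroup.xa (0 : ZMod (2*n)) ∈
        (Set.range (fun i : Fin (h+1) => if i = 0 then QuaternionGroup.a (1 : ZMod (2*n)) else 1) ∪
         Set.range (fun i : Fin (h+1) => if i = 0 then QuaternionGroup.xa 0 else 1) ∪
         {QuaternionGroup.a (-2)}) :=
      Set.mem_union_left _ (Set.mem_union_right _ ⟨0, if_pos rfl⟩)
    replace hx := Subgroup.subset_closure hx
    replace hy := Subgroup.subset_closure hy
    have ha : ∀ j : ZMod (2 * n), QuaternionGroup.a j ∈ Subgroup.closure
        (Set.range (fun i : Fin (h+1) => if i = 0 then QuaternionGroup.a (1 : ZMod (2*n)) else 1) ∪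
         Set.range (fun i : Fin (h+1) => if i = 0 then QuaternionGroup.xa 0 else 1) ∪
         {QuaternionGroup.a (-2)}) := by
      intro j
      have : QuaternionGroup.a 1 ^ j.val = QuaternionGroup.a j := by
        rw [a_one_pow]
        congr 1
        simp [ZMod.natCast_val, ZMod.cast_id]
      exact this ▸ pow_mem hx j.val
    cases g with
    | a j => exact ha j
    | xa j =>
        have : QuaternionGroup.a (-j) * QuaternionGroup.xa 0 = QuaternionGroup.xa j := by
          rw [a_mul_xa]; ring_nf
        exact this ▸ mul_mem (ha (-j)) hy
  · have h2 : QuaternionGroup.a (-2 : ZMod (2 * n)) = (QuaternionGroup.a 2)⁻¹ := by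
      apply eq_inv_of_mul_eq_one_left
      rw [a_mul_a, neg_add_cancel, ← one_def]
    rw [h2, orderOf_inv]
    have : ((2 : ℕ) : ZMod (2 * n)) = (2 : ZMod (2 * n)) := by push_cast; ring
    rw [← this, orderOf_a, ZMod.val_natCast, Nat.mod_eq_of_lt (by omega),
      Nat.gcd_comm, Nat.gcd_eq_left ⟨n, rfl⟩]
    omega
  · rw [List.ofFn_succ]
    have htail : (List.ofFn fun i : Fin h =>
        ⁅if Fin.succ i = 0 then QuaternionGroup.a (1 : ZMod (2 * n)) else (1 : QuaternionGroup n),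
          if Fin.succ i = 0 then QuaternionGroup.xa 0 else (1 : QuaternionGroup n)⁆).prod = 1 := by
      apply List.prod_eq_one
      intro x hx
      rw [List.mem_ofFn] at hx
      obtain ⟨i, rfl⟩ := hx
      simp [Fin.succ_ne_zero]
    rw [List.prod_cons, htail, mul_one]
    simp only [if_pos rfl, if_true]
    have h1 : (QuaternionGroup.a (1 : ZMod (2 * n)))⁻¹ = QuaternionGroup.a (-1) := by
      apply inv_eq_of_mul_eq_one_right
      rw [a_mul_a, add_neg_cancel, ← one_def]
    have h3 : (QuaternionGroup.xa (0 : ZMod (2 * n)))⁻¹ = QuaternionGroup.xa n := by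
      apply inv_eq_of_mul_eq_one_right
      rw [xa_mul_xa, sub_zero, ← Nat.cast_add, ← two_mul, ZMod.natCast_self, ← one_def]
    rw [commutatorElement_def, h1, h3]
    simp only [a_mul_xa, xa_mul_a, xa_mul_xa, a_mul_a]
    rw [one_def]
    congr 1
    have : ((n : ZMod (2 * n)) + n) = 0 := by
      rw [← Nat.cast_add, ← two_mul, ZMod.natCast_self]
    linear_combination this
end

section
/- For all integers n ≥ 2 and h ≥ 1, setting σ = 2n·(2(h−1) + 1) − 1 = 2n(2h−1) − 1, there exist a finite group G with |G| = 4n, functions a, b : Fin h → G, and c ∈ G such that the subgroup generated by the ranges of a and b together with c is all of G, orderOf c = n, (∏_{i} ⁅a i, b i⁆) · c = 1, and the Riemann–Hurwitz condition 2·n·(σ − 1) = |G| · (n·(2h − 1) − 1) holds. -/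
open scoped commutatorElement

open QuaternionGroup in
/-- Existence half of Theorem 4.1 of Anderson–Wootton: for `n ≥ 2` and `h ≥ 1`, with
`σ = 2n(2(h-1)+1) - 1 = 2n(2h-1) - 1`, there is a group of order `4n` (the generalized
quaternion group) with an `(h; n)`-generating vector satisfying the Riemann–Hurwitz
formula; hence `(h, 1)` is a skeletal signature in genus `σ`. -/
theorem h_one_skeletal_signature_exists
    (n h σ : ℕ) (hn : 2 ≤ n) (hh : 1 ≤ h) (hσ : σ = 2 * n * (2 * (h - 1) + 1) - 1) :
    ∃ (G : Type) (_ : Group G) (_ : Fintype G) (a b : Fin h → G) (c : G),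
      Fintype.card G = 4 * n ∧
      Subgroup.closure (Set.range a ∪ Set.range b ∪ {c}) = ⊤ ∧
      orderOf c = n ∧
      (List.ofFn fun i => ⁅a i, b i⁆).prod * c = 1 ∧
      2 * n * (σ - 1) = Fintype.card G * (n * (2 * h - 1) - 1) := by
  haveI : NeZero n := ⟨by omega⟩
  obtain ⟨m, rfl⟩ : ∃ m, h = m + 1 := ⟨h - 1, by omega⟩
  refine ⟨QuaternionGroup n, inferInstance, inferInstance,
    (fun i => if i.val = 0 then xa 0 else 1), (fun i => if i.val = 0 then a 1 else 1),
    a 2, QuaternionGroup.card, ?_, ?_, ?_, ?_⟩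
  · -- generation
    rw [eq_top_iff]
    intro x _
    have hx0 : (xa 0 : QuaternionGroup n) ∈
        Subgroup.closure (Set.range (fun i : Fin (m+1) => if i.val = 0 then xa 0 else 1) ∪
          Set.range (fun i : Fin (m+1) => if i.val = 0 then a 1 else 1) ∪ {a 2}) := by
      apply Subgroup.subset_closure
      exact Or.inl (Or.inl ⟨0, rfl⟩)
    have ha1 : (a 1 : QuaternionGroup n) ∈
        Subgroup.closure (Set.range (fun i : Fin (m+1) => if i.val = 0 then xa 0 else 1) ∪
          Set.range (fun i : Fin (m+1) => if i.val = 0 then a 1 else 1) ∪ {a 2}) := by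
      apply Subgroup.subset_closure
      exact Or.inl (Or.inr ⟨0, rfl⟩)
    obtain (j | j) := x
    · have : (a j : QuaternionGroup n) = (a 1) ^ (j.val : ℕ) := by
        rw [a_one_pow, ZMod.natCast_val, ZMod.cast_id]
      rw [this]
      exact pow_mem ha1 _
    · have : (xa j : QuaternionGroup n) = xa 0 * a j := by
        rw [xa_mul_a, zero_add]
      have hj : (a j : QuaternionGroup n) = (a 1) ^ (j.val : ℕ) := by
        rw [a_one_pow, ZMod.natCast_val, ZMod.cast_id]
      rw [this, hj]
      exact mul_mem hx0 (pow_mem ha1 _)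
  · -- order of c
    rw [QuaternionGroup.orderOf_a]
    have h2 : ((2 : ZMod (2 * n)).val) = 2 := by
      have : ((2 : ℕ) : ZMod (2 * n)) = (2 : ZMod (2 * n)) := by norm_cast
      rw [← this, ZMod.val_cast_of_lt (by omega)]
    rw [h2]
    have hg : Nat.gcd (2 * n) 2 = 2 := by have := Nat.gcd_mul_left 2 n 1; simpa using this
    rw [hg]
    omega
  · -- product of commutators
    rw [List.ofFn_succ]
    have htail : (List.ofFn fun i : Fin m =>
        ⁅(fun i : Fin (m+1) => if i.val = 0 then (xa 0 : QuaternionGroup n) else 1) i.succ,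
          (fun i : Fin (m+1) => if i.val = 0 then (a 1 : QuaternionGroup n) else 1) i.succ⁆).prod
        = 1 := by
      apply List.prod_eq_one
      intro y hy
      rw [List.mem_ofFn] at hy
      obtain ⟨i, rfl⟩ := hy
      simp [Fin.val_succ]
    rw [List.prod_cons, htail, mul_one]
    show ⁅(xa 0 : QuaternionGroup n), a 1⁆ * a 2 = 1
    have h2n : ((n : ZMod (2 * n)) + n) = 0 := by
      have := ZMod.natCast_self (2 * n)
      push_cast at this
      linear_combination this
    have hinv1 : ((xa 0 : QuaternionGroup n))⁻¹ = xa (n : ZMod (2 * n)) := by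
      apply inv_eq_of_mul_eq_one_right
      rw [xa_mul_xa, sub_zero, h2n, QuaternionGroup.one_def]
    have hinv2 : ((a 1 : QuaternionGroup n))⁻¹ = a (-1) := by
      apply inv_eq_of_mul_eq_one_right
      rw [a_mul_a, add_neg_cancel, QuaternionGroup.one_def]
    rw [commutatorElement_def, hinv1, hinv2]
    simp only [xa_mul_a, a_mul_xa, xa_mul_xa, a_mul_a, zero_add, add_zero]
    rw [QuaternionGroup.one_def]
    congr 1
    linear_combination h2n
  · -- Riemann–Hurwitz
    rw [QuaternionGroup.card, hσ]
    simp only [Nat.add_sub_cancel]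
    have h2 : 2 ≤ n * (2 * m + 1) := by
      have := Nat.mul_le_mul hn (show 1 ≤ 2 * m + 1 by omega)
      simpa using this
    obtain ⟨A, hA⟩ : ∃ A, n * (2 * m + 1) = A + 2 := ⟨n * (2 * m + 1) - 2, (Nat.sub_add_cancel h2).symm⟩
    rw [show 2 * (m + 1) - 1 = 2 * m + 1 from by omega, hA,
      show 2 * n * (2 * m + 1) = 2 * (A + 2) from by rw [← hA]; ring,
      show 2 * (A + 2) - 1 - 1 = 2 * (A + 1) from by omega,
      show A + 2 - 1 = A + 1 from by omega]
    ring
end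

section
/- For every integer h ≥ 2, each of the following two sets of integers is infinite: (1) the set of σ ≥ 2 for which there exist a finite group G, an integer n ≥ 2, functions a, b : Fin h → G, and c ∈ G with the subgroup generated by the ranges of a and b together with c equal to G, orderOf c = n, (∏_i ⁅a i, b i⁆)·c = 1, and 2n(σ − 1) = |G|(n(2h − 1) − 1); and (2) the set of σ ≥ 2 for which no such G, n, a, b, c exist. -/
open DihedralGroup

open scoped commutatorElement

/-- Auxiliary: the product of a list all of whose entries beyond the first are `1`. -/
lemma aux_prod_ofFn_ite (G : Type) [Group G] (k : ℕ) (x : G) :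
    (List.ofFn (fun i : Fin (k + 1) => if i.val = 0 then x else 1)).prod = x := by
  rw [List.ofFn_succ]
  have h : (fun i : Fin k => if (i.succ).val = 0 then x else (1 : G)) = fun _ => 1 := by
    funext i; simp
  simp [h]

/-- Auxiliary: `sr 1`, `sr 0` and `r 2` generate the dihedral group. -/
lemma aux_dihedral_closure (n : ℕ) [NeZero n] :
    Subgroup.closure ({sr 1, sr 0, (r 2 : DihedralGroup n)} : Set (DihedralGroup n)) = ⊤ := by
  rw [Subgroup.eq_top_iff']
  intro x
  have hs1 : (sr 1 : DihedralGroup n) ∈ Subgroup.closure {sr 1, sr 0, (r 2 : DihedralGroup n)} :=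
    Subgroup.subset_closure (by simp)
  have hs0 : (sr 0 : DihedralGroup n) ∈ Subgroup.closure {sr 1, sr 0, (r 2 : DihedralGroup n)} :=
    Subgroup.subset_closure (by simp)
  have hr1 : (r 1 : DihedralGroup n) ∈ Subgroup.closure {sr 1, sr 0, (r 2 : DihedralGroup n)} := by
    have h : (r 1 : DihedralGroup n) = sr 0 * sr 1 := by rw [sr_mul_sr]; norm_num
    rw [h]; exact mul_mem hs0 hs1
  have hr : ∀ i : ZMod n,
      (r i : DihedralGroup n) ∈ Subgroup.closure {sr 1, sr 0, (r 2 : DihedralGroup n)} := by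
    intro i
    have h : (r i : DihedralGroup n) = (r 1) ^ i.val := by
      rw [r_one_pow]; congr 1; simp [ZMod.natCast_val, ZMod.cast_id]
    rw [h]; exact pow_mem hr1 _
  cases x with
  | r i => exact hr i
  | sr i =>
    have h : (sr i : DihedralGroup n) = sr 0 * r i := by rw [sr_mul_r]; norm_num
    rw [h]; exact mul_mem hs0 (hr i)

/-- Auxiliary: if the group is cyclic generated (in order) by `c`, the generating-vector
relation forces a contradiction. -/
lemma aux_cyclic_case (G : Type) [Group G] [Fintype G] (h n : ℕ) (hn : 2 ≤ n) (c : G)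
    (hcard : Fintype.card G = n) (hord : orderOf c = n)
    (a b : Fin h → G) (hprod : (List.ofFn fun i => ⁅a i, b i⁆).prod * c = 1) : False := by
  haveI : IsCyclic G :=
    isCyclic_of_orderOf_eq_card c (by simp [Nat.card_eq_fintype_card, hcard, hord])
  have hcomm : ∀ x y : G, x * y = y * x := fun x y => (IsCyclic.commGroup (α := G)).mul_comm x y
  have h1 : (List.ofFn fun i => ⁅a i, b i⁆).prod = 1 := by
    apply List.prod_eq_one
    intro z hz
    obtain ⟨i, rfl⟩ := List.mem_ofFn.mp hz
    exact commutatorElement_eq_one_iff_commute.mpr (hcomm _ _)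
  rw [h1, one_mul] at hprod
  rw [hprod, orderOf_one] at hord
  omega

/-- Theorem 4.1 of Anderson–Wootton: for every `h ≥ 2` the point `(h, 1)` is sporadic:
there are infinitely many genera `σ` in which it is a skeletal signature, and infinitely
many genera `σ` in which it is not. -/
theorem h_one_is_sporadic (h : ℕ) (hh : 2 ≤ h) :
    {σ : ℕ | 2 ≤ σ ∧
      ∃ (G : Type) (_ : Group G) (_ : Fintype G) (n : ℕ) (a b : Fin h → G) (c : G),
        2 ≤ n ∧
        Subgroup.closure (Set.range a ∪ Set.range b ∪ {c}) = ⊤ ∧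
        orderOf c = n ∧
        (List.ofFn fun i => ⁅a i, b i⁆).prod * c = 1 ∧
        2 * n * (σ - 1) = Fintype.card G * (n * (2 * h - 1) - 1)}.Infinite ∧
    {σ : ℕ | 2 ≤ σ ∧
      ¬ ∃ (G : Type) (_ : Group G) (_ : Fintype G) (n : ℕ) (a b : Fin h → G) (c : G),
        2 ≤ n ∧
        Subgroup.closure (Set.range a ∪ Set.range b ∪ {c}) = ⊤ ∧
        orderOf c = n ∧
        (List.ofFn fun i => ⁅a i, b i⁆).prod * c = 1 ∧
        2 * n * (σ - 1) = Fintype.card G * (n * (2 * h - 1) - 1)}.Infinite := by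
  have hm3 : 3 ≤ 2 * h - 1 := by omega
  constructor
  · -- Part (1): the genera `σ = n (2h-1)` for odd `n ≥ 3` all work.
    apply Set.infinite_of_injective_forall_mem
      (f := fun m : ℕ => (2 * m + 3) * (2 * h - 1))
    · intro x y hxy
      simp only at hxy
      have := Nat.eq_of_mul_eq_mul_right (by omega : 0 < 2 * h - 1) hxy
      omega
    · intro m
      set n : ℕ := 2 * m + 3 with hn_def
      haveI : NeZero n := ⟨by omega⟩
      refine ⟨by nlinarith [hm3], DihedralGroup n, inferInstance, inferInstance, n,
        (fun i : Fin h => if i.val = 0 then sr 1 else 1),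
        (fun i : Fin h => if i.val = 0 then sr 0 else 1), r 2, by omega, ?_, ?_, ?_, ?_⟩
      · -- closure is everything
        rw [eq_top_iff, ← aux_dihedral_closure n]
        apply Subgroup.closure_mono
        intro x hx
        simp only [Set.mem_insert_iff, Set.mem_singleton_iff] at hx
        rcases hx with rfl | rfl | rfl
        · exact Or.inl (Or.inl ⟨⟨0, by omega⟩, by simp⟩)
        · exact Or.inl (Or.inr ⟨⟨0, by omega⟩, by simp⟩)
        · exact Or.inr rfl
      · -- order of r 2 is n
        rw [orderOf_r]
        have h2 : ((2 : ZMod n)) = ((2 : ℕ) : ZMod n) := by push_cast; ring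
        rw [h2, ZMod.val_cast_of_lt (by omega)]
        rw [Nat.coprime_two_right.mpr ⟨m + 1, by omega⟩, Nat.div_one]
      · -- the long relation
        have hc : (fun i : Fin h => ⁅(if i.val = 0 then (sr 1 : DihedralGroup n) else 1),
            (if i.val = 0 then sr 0 else 1)⁆) =
            fun i : Fin h => if i.val = 0 then r (-2 : ZMod n) else 1 := by
          funext i
          by_cases hi : i.val = 0 <;> simp only [hi, if_true, if_false, ite_true, ite_false]
          · have h1 : (sr 1 : DihedralGroup n)⁻¹ = sr 1 := rfl
            have h0 : (sr 0 : DihedralGroup n)⁻¹ = sr 0 := rfl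
            rw [commutatorElement_def, h1, h0, sr_mul_sr, r_mul_sr, sr_mul_sr]
            ring_nf
          · simp
        rw [hc]
        obtain ⟨k, hk⟩ : ∃ k, h = k + 1 := ⟨h - 1, by omega⟩
        subst hk
        rw [aux_prod_ofFn_ite, r_mul_r, neg_add_cancel, ← one_def]
      · -- the Riemann–Hurwitz count
        rw [DihedralGroup.card]
  · -- Part (2): genera `σ = p + 1` with `p ≡ 1 mod (2h-1)` prime do not work.
    by_contra hinf
    rw [Set.not_infinite] at hinf
    obtain ⟨N, hN⟩ := hinf.bddAbove
    obtain ⟨p, hp, hNp, hmod⟩ := Nat.exists_prime_gt_modEq_one (k := 2 * h - 1) N (by omega)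
    have hmem : p + 1 ∈ {σ : ℕ | 2 ≤ σ ∧
        ¬ ∃ (G : Type) (_ : Group G) (_ : Fintype G) (n : ℕ) (a b : Fin h → G) (c : G),
          2 ≤ n ∧
          Subgroup.closure (Set.range a ∪ Set.range b ∪ {c}) = ⊤ ∧
          orderOf c = n ∧
          (List.ofFn fun i => ⁅a i, b i⁆).prod * c = 1 ∧
          2 * n * (σ - 1) = Fintype.card G * (n * (2 * h - 1) - 1)} := by
      refine ⟨by have := hp.two_le; omega, ?_⟩
      rintro ⟨G, _, _, n, a, b, c, hn, hclo, hord, hprod, heq⟩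
      set t : ℕ := n * (2 * h - 1) with ht_def
      have ht6 : 6 ≤ t := by
        calc (6 : ℕ) = 2 * 3 := rfl
        _ ≤ n * (2 * h - 1) := Nat.mul_le_mul hn hm3
      set d : ℕ := t - 1 with hd_def
      have hd5 : 5 ≤ d := by omega
      have hdvd : n ∣ Fintype.card G := hord ▸ orderOf_dvd_card
      obtain ⟨k, hk⟩ := hdvd
      have hcardpos : 0 < Fintype.card G := Fintype.card_pos
      have hkpos : 0 < k := by
        rcases Nat.eq_zero_or_pos k with h0 | h0
        · rw [h0, mul_zero] at hk; omega
        · exact h0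
      rw [hk] at heq
      have hp1 : p + 1 - 1 = p := rfl
      rw [hp1] at heq
      have hkd : 2 * p = k * d := by
        have h' : n * (2 * p) = n * (k * d) := by
          calc n * (2 * p) = 2 * n * p := by ring
          _ = n * k * d := heq
          _ = n * (k * d) := by ring
        exact Nat.eq_of_mul_eq_mul_left (by omega) h'
      -- `d` divides `2p`
      by_cases hpd : p ∣ d
      · obtain ⟨e, he⟩ := hpd
        have hke : k * e = 2 := by
          have h' : p * 2 = p * (k * e) := by
            calc p * 2 = 2 * p := by ring
            _ = k * (p * e) := by rw [hkd, he]
            _ = p * (k * e) := by ring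
          exact (Nat.eq_of_mul_eq_mul_left hp.pos h').symm
        have hepos : 0 < e := by
          rcases Nat.eq_zero_or_pos e with h0 | h0
          · rw [h0, mul_zero] at he; omega
          · exact h0
        have he2 : e ≤ 2 := by
          calc e ≤ k * e := Nat.le_mul_of_pos_left e hkpos
          _ = 2 := hke
        interval_cases e
        · -- e = 1 : d = p, contradicting p ≡ 1 mod (2h-1)
          rw [mul_one] at he
          have htp : t = p + 1 := by omega
          have hdvd1 : (2 * h - 1) ∣ p + 1 := ⟨n, by rw [← htp, ht_def]; ring⟩
          have h2 : (p + 1) ≡ (1 + 1) [MOD 2 * h - 1] := Nat.ModEq.add_right 1 hmod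
          have h0 : (p + 1) ≡ 0 [MOD 2 * h - 1] := (Nat.modEq_zero_iff_dvd).mpr hdvd1
          have hfin2 : (2 : ℕ) ≡ 0 [MOD 2 * h - 1] := (h2.symm.trans h0)
          have : (2 * h - 1) ∣ 2 := (Nat.modEq_zero_iff_dvd).mp hfin2
          have := Nat.le_of_dvd (by norm_num) this
          omega
        · -- e = 2 : k = 1, so G is cyclic generated by c
          have hk1 : k = 1 := by omega
          rw [hk1, mul_one] at hk
          exact aux_cyclic_case G h n hn c hk hord a b hprod
      · -- p does not divide d, so d ∣ 2, contradiction with d ≥ 5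
        have hddvd : d ∣ 2 * p := ⟨k, by rw [hkd]; ring⟩
        have hcop : Nat.Coprime d p := (Nat.coprime_comm).mp ((Nat.Prime.coprime_iff_not_dvd hp).mpr hpd)
        have : d ∣ 2 := Nat.Coprime.dvd_of_dvd_mul_right hcop hddvd
        have := Nat.le_of_dvd (by norm_num) this
        omega
    have := hN hmem
    omega
end
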